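/- For a simple undirected graph with adjacency matrix A, the number of paths of length 3 from node i to node j is given entrywise by the matrix P_3 = A^3 − (I ∘ A^2)·A − I ∘ A^3 − A·(I ∘ A^2) + A. -/

import Mathlib

open SimpleGraph Matrix Finset

variable {N : ℕ} {G : SimpleGraph (Fin N)} [DecidableRel G.Adj]

def walk3Equiv (i j : Fin N) :
    {w : G.Walk i j // w.length = 3} ≃
      {p : Fin N × Fin N // G.Adj i p.1 ∧ G.Adj p.1 p.2 ∧ G.Adj p.2 j} where
  toFun w := ⟨(w.1.getVert 1, w.1.getVert 2), by
    obtain ⟨w, hw⟩ := w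
    refine ⟨?_, ?_, ?_⟩
    · simpa using w.adj_getVert_succ (by omega : 0 < w.length)
    · exact w.adj_getVert_succ (by omega : 1 < w.length)
    · have h := w.adj_getVert_succ (by omega : 2 < w.length)
      rwa [show (2 + 1) = w.length by omega, w.getVert_length] at h⟩
  invFun p := ⟨.cons p.2.1 (.cons p.2.2.1 (.cons p.2.2.2 .nil)), rfl⟩
  left_inv := by
    rintro ⟨w, hw⟩
    match w, hw with
    | .cons h1 (.cons h2 (.cons h3 .nil)), _ => rfl
  right_inv := by rintro ⟨⟨a, b⟩, h⟩; rfl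

lemma path3_iff {i j a b : Fin N} (h1 : G.Adj i a) (h2 : G.Adj a b) (h3 : G.Adj b j) :
    (SimpleGraph.Walk.cons h1 (.cons h2 (.cons h3 .nil))).IsPath ↔
      b ≠ i ∧ a ≠ j ∧ i ≠ j := by
  simp [SimpleGraph.Walk.isPath_def, h1.ne, h2.ne, h3.ne, List.nodup_cons]
  aesop

lemma card_path3 (i j : Fin N) :
    (Nat.card {w : G.Walk i j // w.length = 3 ∧ w.IsPath} : ℤ) =
      ∑ a : Fin N, ∑ b : Fin N,
        if G.Adj i a ∧ G.Adj a b ∧ G.Adj b j ∧ b ≠ i ∧ a ≠ j ∧ i ≠ j then 1 else 0 := by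
  have e : {w : G.Walk i j // w.length = 3 ∧ w.IsPath} ≃
      {p : Fin N × Fin N // (G.Adj i p.1 ∧ G.Adj p.1 p.2 ∧ G.Adj p.2 j) ∧
        (p.2 ≠ i ∧ p.1 ≠ j ∧ i ≠ j)} := by
    refine ((Equiv.subtypeSubtypeEquivSubtypeInter _ _).symm.trans
      (((walk3Equiv i j).subtypeEquiv ?_).trans
        (Equiv.subtypeSubtypeEquivSubtypeInter _ _)))
    rintro ⟨w, hw⟩
    have := ((walk3Equiv i j).left_inv ⟨w, hw⟩)
    constructor
    · intro hp
      rw [← Subtype.ext_iff.mp this] at hp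
      exact (path3_iff _ _ _).mp hp
    · intro hp
      rw [← Subtype.ext_iff.mp this]
      exact (path3_iff _ _ _).mpr hp
  rw [Nat.card_congr e, Nat.card_eq_fintype_card, Fintype.card_subtype]
  rw [Finset.card_filter]
  push_cast
  rw [Fintype.sum_prod_type]
  refine Finset.sum_congr rfl fun a _ => Finset.sum_congr rfl fun b _ => ?_
  split_ifs <;> first | rfl | tauto

lemma sumCollapse {α : Type*} [Fintype α] [DecidableEq α] (c : α) (P : α → Prop)
    [DecidablePred P] :
    ∑ b : α, (if P b ∧ b = c then (1 : ℤ) else 0) = if P c then 1 else 0 := by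
  have h : ∀ b, (if P b ∧ b = c then (1 : ℤ) else 0) =
      if b = c then (if P b then 1 else 0) else 0 := by
    intro b; split_ifs <;> first | rfl | tauto
  simp_rw [h]
  simp

lemma pointwise (i j a b : Fin N) :
    (if G.Adj i a ∧ G.Adj a b ∧ G.Adj b j ∧ b ≠ i ∧ a ≠ j ∧ i ≠ j then (1 : ℤ) else 0) =
      (if G.Adj i a ∧ G.Adj a b ∧ G.Adj b j then 1 else 0)
      - (if (G.Adj i a ∧ G.Adj a i ∧ G.Adj i j) ∧ b = i then 1 else 0)
      - (if (G.Adj i a ∧ G.Adj a b ∧ G.Adj b j) ∧ i = j then 1 else 0)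
      - (if (G.Adj i j ∧ G.Adj j b ∧ G.Adj b j) ∧ a = j then 1 else 0)
      + (if (G.Adj i j) ∧ b = i ∧ a = j then 1 else 0) := by
  by_cases h1 : G.Adj i a <;> by_cases h2 : G.Adj a b <;> by_cases h3 : G.Adj b j <;>
    by_cases hx : b = i <;> by_cases hy : a = j <;> by_cases hz : i = j <;>
    subst_vars <;> simp_all <;> exact h2 (G.adj_symm h3)

lemma pow3_apply (i j : Fin N) :
    (G.adjMatrix ℤ ^ 3) i j =
      ∑ a : Fin N, ∑ b : Fin N, if G.Adj i a ∧ G.Adj a b ∧ G.Adj b j then (1 : ℤ) else 0 := by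
  simp only [pow_succ, pow_zero, one_mul, Matrix.mul_apply, SimpleGraph.adjMatrix_apply,
    Finset.sum_mul]
  rw [Finset.sum_comm]
  refine Finset.sum_congr rfl fun a _ => Finset.sum_congr rfl fun b _ => ?_
  split_ifs <;> simp_all

lemma Tx_apply (i j : Fin N) :
    (Matrix.hadamard (1 : Matrix (Fin N) (Fin N) ℤ) (G.adjMatrix ℤ ^ 2) * G.adjMatrix ℤ) i j =
      ∑ a : Fin N, ∑ b : Fin N,
        if (G.Adj i a ∧ G.Adj a i ∧ G.Adj i j) ∧ b = i then (1 : ℤ) else 0 := by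
  simp_rw [sumCollapse]
  simp only [Matrix.mul_apply, Matrix.hadamard_apply, Matrix.one_apply, ite_mul, zero_mul,
    one_mul, Finset.sum_ite_eq, Finset.mem_univ, if_true, pow_two, SimpleGraph.adjMatrix_apply,
    Finset.sum_mul]
  refine Finset.sum_congr rfl fun a _ => ?_
  split_ifs <;> simp_all

lemma Tz_apply (i j : Fin N) :
    Matrix.hadamard (1 : Matrix (Fin N) (Fin N) ℤ) (G.adjMatrix ℤ ^ 3) i j =
      ∑ a : Fin N, ∑ b : Fin N,
        if (G.Adj i a ∧ G.Adj a b ∧ G.Adj b j) ∧ i = j then (1 : ℤ) else 0 := by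
  rw [Matrix.hadamard_apply, Matrix.one_apply]
  by_cases h : i = j <;> simp [h, pow3_apply]

lemma Ty_apply (i j : Fin N) :
    (G.adjMatrix ℤ * Matrix.hadamard (1 : Matrix (Fin N) (Fin N) ℤ) (G.adjMatrix ℤ ^ 2)) i j =
      ∑ a : Fin N, ∑ b : Fin N,
        if (G.Adj i j ∧ G.Adj j b ∧ G.Adj b j) ∧ a = j then (1 : ℤ) else 0 := by
  rw [Finset.sum_comm]
  simp_rw [sumCollapse]
  rw [Matrix.mul_apply]
  have hk : ∀ k, G.adjMatrix ℤ i k *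
      Matrix.hadamard (1 : Matrix (Fin N) (Fin N) ℤ) (G.adjMatrix ℤ ^ 2) k j =
      if k = j then G.adjMatrix ℤ i k * (G.adjMatrix ℤ ^ 2) k j else 0 := fun k => by
    rw [Matrix.hadamard_apply, Matrix.one_apply]; split_ifs <;> ring
  simp_rw [hk, Finset.sum_ite_eq' Finset.univ j, Finset.mem_univ, if_true]
  rw [pow_two, Matrix.mul_apply, Finset.mul_sum]
  refine Finset.sum_congr rfl fun b _ => ?_
  simp only [SimpleGraph.adjMatrix_apply]
  split_ifs <;> simp_all

lemma Txy_apply (i j : Fin N) :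
    (G.adjMatrix ℤ) i j =
      ∑ a : Fin N, ∑ b : Fin N,
        if (G.Adj i j) ∧ b = i ∧ a = j then (1 : ℤ) else 0 := by
  have h : ∀ a b : Fin N, (if (G.Adj i j) ∧ b = i ∧ a = j then (1 : ℤ) else 0) =
      if ((G.Adj i j) ∧ a = j) ∧ b = i then 1 else 0 := by
    intro a b; split_ifs <;> first | rfl | tauto
  simp_rw [h, sumCollapse]
  simp


/-- The path matrix of length 3: P₃ = A³ − (I∘A²)·A − I∘A³ − A·(I∘A²) + A. -/
theorem stmt3 (N : ℕ) (G : SimpleGraph (Fin N)) [DecidableRel G.Adj] :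
    (Matrix.of fun i j : Fin N =>
        (Nat.card {w : G.Walk i j // w.length = 3 ∧ w.IsPath} : ℤ)) =
      G.adjMatrix ℤ ^ 3
        - Matrix.hadamard (1 : Matrix (Fin N) (Fin N) ℤ) (G.adjMatrix ℤ ^ 2) * G.adjMatrix ℤ
        - Matrix.hadamard (1 : Matrix (Fin N) (Fin N) ℤ) (G.adjMatrix ℤ ^ 3)
        - G.adjMatrix ℤ * Matrix.hadamard (1 : Matrix (Fin N) (Fin N) ℤ) (G.adjMatrix ℤ ^ 2)
        + G.adjMatrix ℤ := by
  ext i j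
  rw [Matrix.of_apply]
  simp only [Matrix.sub_apply, Matrix.add_apply]
  rw [card_path3, pow3_apply, Tx_apply, Tz_apply, Ty_apply, Txy_apply]
  simp_rw [← Finset.sum_sub_distrib, ← Finset.sum_add_distrib]
  exact Finset.sum_congr rfl fun a _ => Finset.sum_congr rfl fun b _ => pointwise i j a b
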